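/- Let X and Z be real symmetric n×n matrices and let M be an n×n real matrix that is (κ,γ)-strongly stable for some κ > 0 and 0 < γ < 1. If X ⪯ MᵀXM + Z, then X ⪯ (κ²/γ)·‖Z‖·I. -/

import Mathlib

open Matrix
open scoped Matrix.Norms.L2Operator

/-- A real square matrix `M` is `(κ,γ)`-strongly stable if there exist an invertible `H`
and an `L` with `M = H L H⁻¹`, `‖L‖ ≤ 1 − γ` and `‖H‖·‖H⁻¹‖ ≤ κ`
(spectral norms). -/
def StronglyStable {n : ℕ} (M : Matrix (Fin n) (Fin n) ℝ) (κ γ : ℝ) : Prop :=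
  ∃ H L : Matrix (Fin n) (Fin n) ℝ,
    IsUnit H.det ∧ M = H * L * H⁻¹ ∧ ‖L‖ ≤ 1 - γ ∧ ‖H‖ * ‖H⁻¹‖ ≤ κ

/-- Quadratic form bound via the spectral norm. -/
lemma quad_le_norm {n : ℕ} (A : Matrix (Fin n) (Fin n) ℝ) (w : Fin n → ℝ) :
    w ⬝ᵥ A *ᵥ w ≤ ‖A‖ * (w ⬝ᵥ w) := by
  let w' : EuclideanSpace ℝ (Fin n) := (EuclideanSpace.equiv (Fin n) ℝ).symm w
  let u' : EuclideanSpace ℝ (Fin n) := (EuclideanSpace.equiv (Fin n) ℝ).symm (A *ᵥ w)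
  have h1 : w ⬝ᵥ A *ᵥ w = (inner ℝ w' u' : ℝ) := by
    rw [PiLp.inner_apply]; simp [dotProduct, w', u', mul_comm]
  have h2 : (inner ℝ w' u' : ℝ) ≤ ‖w'‖ * ‖u'‖ := real_inner_le_norm w' u'
  have h3 : ‖u'‖ ≤ ‖A‖ * ‖w'‖ := A.l2_opNorm_mulVec w'
  have h4 : w ⬝ᵥ w = ‖w'‖ * ‖w'‖ := by
    rw [← real_inner_self_eq_norm_mul_norm, PiLp.inner_apply]
    simp [dotProduct, w', sq]
  nlinarith [norm_nonneg w', norm_nonneg u', norm_nonneg A]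

/-- Euclidean length bound for matrix-vector products, in dot-product form. -/
lemma mulVec_dot_le {n : ℕ} (A : Matrix (Fin n) (Fin n) ℝ) (w : Fin n → ℝ) :
    (A *ᵥ w) ⬝ᵥ (A *ᵥ w) ≤ ‖A‖ ^ 2 * (w ⬝ᵥ w) := by
  let w' : EuclideanSpace ℝ (Fin n) := (EuclideanSpace.equiv (Fin n) ℝ).symm w
  let u' : EuclideanSpace ℝ (Fin n) := (EuclideanSpace.equiv (Fin n) ℝ).symm (A *ᵥ w)
  have h3 : ‖u'‖ ≤ ‖A‖ * ‖w'‖ := A.l2_opNorm_mulVec w'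
  have h4 : w ⬝ᵥ w = ‖w'‖ * ‖w'‖ := by
    rw [← real_inner_self_eq_norm_mul_norm, PiLp.inner_apply]
    simp [dotProduct, w', sq]
  have h5 : (A *ᵥ w) ⬝ᵥ (A *ᵥ w) = ‖u'‖ * ‖u'‖ := by
    rw [← real_inner_self_eq_norm_mul_norm, PiLp.inner_apply]
    simp [dotProduct, u', sq]
  nlinarith [norm_nonneg w', norm_nonneg u', norm_nonneg A]

lemma dot_self_nonneg' {n : ℕ} (v : Fin n → ℝ) : (0:ℝ) ≤ v ⬝ᵥ v :=
  Finset.sum_nonneg fun i _ => mul_self_nonneg (v i)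

/-- If `X` and `Z` are symmetric, `M` is `(κ,γ)`-strongly stable, and `X ⪯ MᵀXM + Z`,
then `X ⪯ (κ²/γ)·‖Z‖·I`. -/
theorem loewner_bound_of_stronglyStable {n : ℕ}
    (X Z M : Matrix (Fin n) (Fin n) ℝ) (κ γ : ℝ)
    (hκ : 0 < κ) (hγ0 : 0 < γ) (hγ1 : γ < 1)
    (hX : X.IsSymm) (hZ : Z.IsSymm)
    (hM : StronglyStable M κ γ)
    (h : (Mᵀ * X * M + Z - X).PosSemidef) :
    ((κ ^ 2 / γ * ‖Z‖) • (1 : Matrix (Fin n) (Fin n) ℝ) - X).PosSemidef := by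
  obtain ⟨H, L, hdet, hMeq, hL, hHκ⟩ := hM
  have hγ' : (0:ℝ) ≤ 1 - γ := by linarith
  have hHinv : H * H⁻¹ = 1 := mul_nonsing_inv H hdet
  have hinvH : H⁻¹ * H = 1 := nonsing_inv_mul H hdet
  have hpow : ∀ k : ℕ, M ^ k = H * L ^ k * H⁻¹ := by
    intro k
    induction k with
    | zero => simp [hHinv]
    | succ k ih =>
      rw [pow_succ, ih, hMeq, pow_succ]
      rw [show H * L ^ k * H⁻¹ * (H * L * H⁻¹) = H * L ^ k * (H⁻¹ * H) * L * H⁻¹ by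
        noncomm_ring]
      rw [hinvH]; noncomm_ring
  have hLpow : ∀ k : ℕ, ‖L ^ (k + 1)‖ ≤ ‖L‖ ^ (k + 1) := by
    intro k
    induction k with
    | zero => simp
    | succ k ih =>
      calc ‖L ^ (k+1+1)‖ = ‖L ^ (k+1) * L‖ := by rw [pow_succ]
        _ ≤ ‖L ^ (k+1)‖ * ‖L‖ := Matrix.l2_opNorm_mul _ _
        _ ≤ ‖L‖ ^ (k+1) * ‖L‖ := mul_le_mul_of_nonneg_right ih (norm_nonneg _)
        _ = ‖L‖ ^ (k+1+1) := by ring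
  have hMk : ∀ k : ℕ, ‖M ^ k‖ ≤ κ * (1 - γ) ^ k := by
    intro k
    have hLn : (0:ℝ) ≤ ‖L‖ := norm_nonneg _
    cases k with
    | zero =>
      rw [pow_zero, pow_zero, mul_one, ← hHinv]
      exact (Matrix.l2_opNorm_mul H H⁻¹).trans hHκ
    | succ k =>
    have hLk : ‖L ^ (k+1)‖ ≤ ‖L‖ ^ (k+1) := hLpow k
    calc ‖M ^ (k+1)‖ = ‖H * L ^ (k+1) * H⁻¹‖ := by rw [hpow]
      _ ≤ ‖H * L ^ (k+1)‖ * ‖H⁻¹‖ := Matrix.l2_opNorm_mul _ _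
      _ ≤ ‖H‖ * ‖L ^ (k+1)‖ * ‖H⁻¹‖ :=
          mul_le_mul_of_nonneg_right (Matrix.l2_opNorm_mul _ _) (norm_nonneg _)
      _ = ‖H‖ * ‖H⁻¹‖ * ‖L ^ (k+1)‖ := by ring
      _ ≤ κ * ‖L‖ ^ (k+1) := by
          apply mul_le_mul hHκ hLk (norm_nonneg _) (le_of_lt hκ)
      _ ≤ κ * (1 - γ) ^ (k+1) :=
          mul_le_mul_of_nonneg_left (pow_le_pow_left₀ hLn hL (k+1)) (le_of_lt hκ)
  -- one-step inequality
  have hstep : ∀ w : Fin n → ℝ,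
      w ⬝ᵥ X *ᵥ w ≤ (M *ᵥ w) ⬝ᵥ X *ᵥ (M *ᵥ w) + w ⬝ᵥ Z *ᵥ w := by
    intro w
    have hps := h.dotProduct_mulVec_nonneg w
    simp only [star_trivial] at hps
    have hrw : w ⬝ᵥ (Mᵀ * X * M + Z - X) *ᵥ w
        = (M *ᵥ w) ⬝ᵥ X *ᵥ (M *ᵥ w) + w ⬝ᵥ Z *ᵥ w - w ⬝ᵥ X *ᵥ w := by
      rw [sub_mulVec, add_mulVec, dotProduct_sub, dotProduct_add]
      congr 2
      rw [← Matrix.mulVec_mulVec, ← Matrix.mulVec_mulVec, Matrix.dotProduct_mulVec,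
        Matrix.vecMul_transpose]
    rw [hrw] at hps
    linarith
  -- iterated inequality
  have hiter : ∀ (k : ℕ) (v : Fin n → ℝ),
      v ⬝ᵥ X *ᵥ v ≤ ((M ^ k) *ᵥ v) ⬝ᵥ X *ᵥ ((M ^ k) *ᵥ v)
        + ∑ i ∈ Finset.range k, ((M ^ i) *ᵥ v) ⬝ᵥ Z *ᵥ ((M ^ i) *ᵥ v) := by
    intro k
    induction k with
    | zero => intro v; simp
    | succ k ih =>
      intro v
      have h1 := ih v
      have h2 := hstep ((M ^ k) *ᵥ v)
      have h3 : M *ᵥ ((M ^ k) *ᵥ v) = (M ^ (k+1)) *ᵥ v := by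
        rw [Matrix.mulVec_mulVec, ← pow_succ']
      rw [h3] at h2
      rw [Finset.sum_range_succ]
      linarith
  set c : ℝ := κ ^ 2 / γ * ‖Z‖ with hc
  refine posSemidef_iff_dotProduct_mulVec.mpr ⟨?_, ?_⟩
  · show ((c • (1 : Matrix (Fin n) (Fin n) ℝ) - X)).conjTranspose = _
    rw [conjTranspose_sub, conjTranspose_smul, conjTranspose_one, star_trivial,
      show X.conjTranspose = Xᵀ from rfl, hX]
  · intro v
    simp only [star_trivial, sub_mulVec, smul_mulVec, one_mulVec, dotProduct_sub,
      dotProduct_smul, smul_eq_mul]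
    rw [sub_nonneg]
    set r : ℝ := (1 - γ) ^ 2 with hr
    have hr0 : (0:ℝ) ≤ r := sq_nonneg _
    have hr1 : r < 1 := by nlinarith
    have h1r : (0:ℝ) < 1 - r := by linarith
    have hγr : γ ≤ 1 - r := by nlinarith
    have hvv : (0:ℝ) ≤ v ⬝ᵥ v := dot_self_nonneg' v
    -- dot-product bound for powers
    have hdotk : ∀ k : ℕ, ((M ^ k) *ᵥ v) ⬝ᵥ ((M ^ k) *ᵥ v) ≤ κ ^ 2 * r ^ k * (v ⬝ᵥ v) := by
      intro k
      have h1 := mulVec_dot_le (M ^ k) v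
      have h2 : ‖M ^ k‖ ^ 2 ≤ (κ * (1 - γ) ^ k) ^ 2 :=
        pow_le_pow_left₀ (norm_nonneg _) (hMk k) 2
      have h3 : (κ * (1 - γ) ^ k) ^ 2 = κ ^ 2 * r ^ k := by
        rw [hr, mul_pow, ← pow_mul, ← pow_mul, Nat.mul_comm 2 k]
      calc ((M ^ k) *ᵥ v) ⬝ᵥ ((M ^ k) *ᵥ v) ≤ ‖M ^ k‖ ^ 2 * (v ⬝ᵥ v) := h1
        _ ≤ κ ^ 2 * r ^ k * (v ⬝ᵥ v) := by
            apply mul_le_mul_of_nonneg_right _ hvv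
            rw [← h3]; exact h2
    -- geometric sum bound
    have hgeom : ∀ k : ℕ, (∑ i ∈ Finset.range k, r ^ i) ≤ 1 / (1 - r) := by
      intro k
      rw [le_div_iff₀ h1r]
      have e := geom_sum_mul r k
      have p : (0:ℝ) ≤ r ^ k := pow_nonneg hr0 k
      nlinarith
    -- bound for each k
    have key : ∀ k : ℕ, v ⬝ᵥ X *ᵥ v ≤ ‖X‖ * κ ^ 2 * (v ⬝ᵥ v) * r ^ k + c * (v ⬝ᵥ v) := by
      intro k
      have hXk : ((M ^ k) *ᵥ v) ⬝ᵥ X *ᵥ ((M ^ k) *ᵥ v) ≤ ‖X‖ * κ ^ 2 * (v ⬝ᵥ v) * r ^ k := by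
        calc ((M ^ k) *ᵥ v) ⬝ᵥ X *ᵥ ((M ^ k) *ᵥ v)
            ≤ ‖X‖ * (((M ^ k) *ᵥ v) ⬝ᵥ ((M ^ k) *ᵥ v)) := quad_le_norm X _
          _ ≤ ‖X‖ * (κ ^ 2 * r ^ k * (v ⬝ᵥ v)) :=
              mul_le_mul_of_nonneg_left (hdotk k) (norm_nonneg X)
          _ = ‖X‖ * κ ^ 2 * (v ⬝ᵥ v) * r ^ k := by ring
      have hS : (∑ i ∈ Finset.range k, ((M ^ i) *ᵥ v) ⬝ᵥ Z *ᵥ ((M ^ i) *ᵥ v))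
          ≤ c * (v ⬝ᵥ v) := by
        have hZnn : (0:ℝ) ≤ ‖Z‖ * κ ^ 2 * (v ⬝ᵥ v) := by positivity
        calc (∑ i ∈ Finset.range k, ((M ^ i) *ᵥ v) ⬝ᵥ Z *ᵥ ((M ^ i) *ᵥ v))
            ≤ ∑ i ∈ Finset.range k, ‖Z‖ * κ ^ 2 * (v ⬝ᵥ v) * r ^ i := by
              apply Finset.sum_le_sum
              intro i _
              calc ((M ^ i) *ᵥ v) ⬝ᵥ Z *ᵥ ((M ^ i) *ᵥ v)
                  ≤ ‖Z‖ * (((M ^ i) *ᵥ v) ⬝ᵥ ((M ^ i) *ᵥ v)) := quad_le_norm Z _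
                _ ≤ ‖Z‖ * (κ ^ 2 * r ^ i * (v ⬝ᵥ v)) :=
                    mul_le_mul_of_nonneg_left (hdotk i) (norm_nonneg Z)
                _ = ‖Z‖ * κ ^ 2 * (v ⬝ᵥ v) * r ^ i := by ring
          _ = ‖Z‖ * κ ^ 2 * (v ⬝ᵥ v) * ∑ i ∈ Finset.range k, r ^ i := by
              rw [Finset.mul_sum]
          _ ≤ ‖Z‖ * κ ^ 2 * (v ⬝ᵥ v) * (1 / (1 - r)) :=
              mul_le_mul_of_nonneg_left (hgeom k) hZnn
          _ ≤ ‖Z‖ * κ ^ 2 * (v ⬝ᵥ v) * (1 / γ) :=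
              mul_le_mul_of_nonneg_left (one_div_le_one_div_of_le hγ0 hγr) hZnn
          _ = c * (v ⬝ᵥ v) := by rw [hc]; ring
      have := hiter k v
      linarith
    have C0 : (0:ℝ) ≤ ‖X‖ * κ ^ 2 * (v ⬝ᵥ v) := by positivity
    have htend : Filter.Tendsto
        (fun k : ℕ => ‖X‖ * κ ^ 2 * (v ⬝ᵥ v) * r ^ k + c * (v ⬝ᵥ v))
        Filter.atTop (nhds (c * (v ⬝ᵥ v))) := by
      have := ((tendsto_pow_atTop_nhds_zero_of_lt_one hr0 hr1).const_mul
        (‖X‖ * κ ^ 2 * (v ⬝ᵥ v))).add_const (c * (v ⬝ᵥ v))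
      simpa using this
    have hfin : v ⬝ᵥ X *ᵥ v ≤ c * (v ⬝ᵥ v) := ge_of_tendsto' htend key
    exact hfin
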